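/- Let V be a finite set with |V| = n+1, and let (V_0, …, V_m) and (V'_0, …, V'_m) be two ordered partitions of V into m+1 nonempty parts. Let λ ∈ ℝ^V have all coordinates strictly positive, set ρ'_{j'} = ∑_{i∈V'_{j'}} λ_i, and define the (m+1)×(m+1) matrix M by M_{j', j} = ∑_{i ∈ V'_{j'} ∩ V_j} λ_i. Then |det M| ≤ ∏_{j'=0}^{m} ρ'_{j'}, with equality if and only if the two partitions coincide as unordered families of sets, i.e., {V_0, …, V_m} = {V'_0, …, V'_m}. -/

import Mathlib

/-- For two ordered partitions of `V` (`|V| = n+1`) into `m+1` nonempty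
parts (encoded by surjective `idx, idx' : V → Fin (m+1)`) and `λ` with strictly positive
coordinates, the matrix `M_{j',j} = ∑_{i ∈ V'_{j'} ∩ V_j} λ_i` satisfies
`|det M| ≤ ∏_{j'} ρ'_{j'}`, with equality iff the two partitions coincide as unordered
families (i.e. there is a permutation `σ` with `V'_{σ j} = V_j` for all `j`). -/
theorem statement5 {V : Type*} [Fintype V] [DecidableEq V] (n m : ℕ)
    (hV : Fintype.card V = n + 1)
    (idx idx' : V → Fin (m + 1))
    (hidx : Function.Surjective idx) (hidx' : Function.Surjective idx')
    (l : V → ℝ) (hl : ∀ i, 0 < l i) :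
    |Matrix.det (Matrix.of fun (j' j : Fin (m + 1)) =>
        ∑ i ∈ Finset.univ.filter (fun i => idx' i = j' ∧ idx i = j), l i)|
      ≤ ∏ j', ∑ i ∈ Finset.univ.filter (fun i => idx' i = j'), l i
    ∧ (|Matrix.det (Matrix.of fun (j' j : Fin (m + 1)) =>
          ∑ i ∈ Finset.univ.filter (fun i => idx' i = j' ∧ idx i = j), l i)|
        = ∏ j', ∑ i ∈ Finset.univ.filter (fun i => idx' i = j'), l i
      ↔ ∃ σ : Equiv.Perm (Fin (m + 1)), ∀ i, idx' i = σ (idx i)) := by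
  classical
  set M : Matrix (Fin (m+1)) (Fin (m+1)) ℝ :=
    Matrix.of (fun (j' j : Fin (m + 1)) =>
      ∑ i ∈ Finset.univ.filter (fun i => idx' i = j' ∧ idx i = j), l i) with hMdef
  set ρ : Fin (m+1) → ℝ :=
    (fun j' => ∑ i ∈ Finset.univ.filter (fun i => idx' i = j'), l i) with hρdef
  -- basic facts
  have hMnn : ∀ j' j, 0 ≤ M j' j := fun j' j =>
    Finset.sum_nonneg fun i _ => (hl i).le
  have hMentry : ∀ j' j, M j' j =
      ∑ i ∈ Finset.univ.filter (fun i => idx' i = j' ∧ idx i = j), l i := fun _ _ => rfl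
  have hrow : ∀ j', ∑ j, M j' j = ρ j' := by
    intro j'
    have h1 : ∀ j, M j' j =
        ∑ i ∈ (Finset.univ.filter (fun i => idx' i = j')).filter (fun i => idx i = j), l i := by
      intro j; rw [hMentry, Finset.filter_filter]
    simp_rw [h1]
    exact Finset.sum_fiberwise _ _ _
  have hρpos : ∀ j', 0 < ρ j' := by
    intro j'
    obtain ⟨i, hi⟩ := hidx' j'
    exact Finset.sum_pos (fun k _ => hl k) ⟨i, by simp [hi]⟩
  have hpipos : 0 < ∏ j', ρ j' := Finset.prod_pos fun j' _ => hρpos j'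
  have hTnn : ∀ f : Fin (m+1) → Fin (m+1), 0 ≤ ∏ j', M j' (f j') :=
    fun f => Finset.prod_nonneg fun j' _ => hMnn _ _
  have hdet : M.det = ∑ σ : Equiv.Perm (Fin (m+1)),
      ((Equiv.Perm.sign σ : ℤ) : ℝ) * ∏ j', M j' (σ j') := by
    rw [← Matrix.det_transpose, Matrix.det_apply']
    simp [Matrix.transpose_apply]
  have habs : ∀ σ : Equiv.Perm (Fin (m+1)),
      |((Equiv.Perm.sign σ : ℤ) : ℝ) * ∏ j', M j' (σ j')| = ∏ j', M j' (σ j') := by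
    intro σ
    rcases Int.units_eq_one_or (Equiv.Perm.sign σ) with h | h <;>
      simp [h, abs_of_nonneg, hTnn σ]
  have hineq1 : |M.det| ≤ ∑ σ : Equiv.Perm (Fin (m+1)), ∏ j', M j' (σ j') := by
    rw [hdet]
    refine (Finset.abs_sum_le_sum_abs _ _).trans_eq ?_
    exact Finset.sum_congr rfl fun σ _ => habs σ
  have himg : ∑ σ : Equiv.Perm (Fin (m+1)), ∏ j', M j' (σ j')
      = ∑ f ∈ Finset.univ.image (fun σ : Equiv.Perm (Fin (m+1)) => ⇑σ), ∏ j', M j' (f j') :=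
    (Finset.sum_image
      (f := fun f : Fin (m+1) → Fin (m+1) => ∏ j', M j' (f j'))
      (g := fun σ : Equiv.Perm (Fin (m+1)) => ⇑σ)
      (s := Finset.univ)
      (fun a _ b _ h => Equiv.coe_fn_injective h)).symm
  have hineq2 : ∑ f ∈ Finset.univ.image (fun σ : Equiv.Perm (Fin (m+1)) => ⇑σ),
        ∏ j', M j' (f j')
      ≤ ∑ f ∈ Fintype.piFinset (fun _ : Fin (m+1) => (Finset.univ : Finset (Fin (m+1)))),
        ∏ j', M j' (f j') :=
    Finset.sum_le_sum_of_subset_of_nonneg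
      (by intro f _; simp [Fintype.mem_piFinset]) (fun f _ _ => hTnn f)
  have hS : (∑ f ∈ Fintype.piFinset (fun _ : Fin (m+1) => (Finset.univ : Finset (Fin (m+1)))),
      ∏ j', M j' (f j')) = ∏ j', ρ j' := by
    calc (∑ f ∈ Fintype.piFinset (fun _ : Fin (m+1) => (Finset.univ : Finset (Fin (m+1)))),
        ∏ j', M j' (f j')) = ∏ j', ∑ j, M j' j := (Finset.prod_univ_sum _ _).symm
      _ = ∏ j', ρ j' := Finset.prod_congr rfl fun j' _ => hrow j'
  have hineq : |M.det| ≤ ∏ j', ρ j' :=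
    hineq1.trans (by rw [himg]; exact hineq2.trans_eq hS)
  have hMipos : ∀ i, 0 < M (idx' i) (idx i) := by
    intro i
    exact Finset.sum_pos (fun k _ => hl k) ⟨i, by simp⟩
  refine ⟨hineq, ?_, ?_⟩
  · -- equality → exists permutation
    intro heq
    have hsum1 : ∑ σ : Equiv.Perm (Fin (m+1)), ∏ j', M j' (σ j') = ∏ j', ρ j' := by
      refine le_antisymm (by rw [himg]; exact hineq2.trans_eq hS) ?_
      rw [← heq]; exact hineq1
    have hsub : Finset.univ.image (fun σ : Equiv.Perm (Fin (m+1)) => ⇑σ)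
        ⊆ Fintype.piFinset (fun _ : Fin (m+1) => (Finset.univ : Finset (Fin (m+1)))) := by
      intro f _; simp [Fintype.mem_piFinset]
    have hsdiff : ∑ f ∈ Fintype.piFinset (fun _ : Fin (m+1) => (Finset.univ : Finset (Fin (m+1))))
          \ Finset.univ.image (fun σ : Equiv.Perm (Fin (m+1)) => ⇑σ), ∏ j', M j' (f j') = 0 := by
      have := Finset.sum_sdiff (f := fun f => ∏ j', M j' (f j')) hsub
      have h2 := hS
      rw [← this, ← himg, hsum1] at h2
      linarith
    have hninj : ∀ f : Fin (m+1) → Fin (m+1), ¬ Function.Injective f →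
        ∏ j', M j' (f j') = 0 := by
      intro f hf
      refine (Finset.sum_eq_zero_iff_of_nonneg (fun g _ => hTnn g)).mp hsdiff f ?_
      rw [Finset.mem_sdiff]
      constructor
      · simp [Fintype.mem_piFinset]
      · intro hmem
        obtain ⟨σ, _, hσ⟩ := Finset.mem_image.mp hmem
        exact hf (hσ ▸ σ.injective)
    have hex : ∃ σ : Equiv.Perm (Fin (m+1)), ∏ j', M j' (σ j') ≠ 0 := by
      by_contra h
      push_neg at h
      rw [Finset.sum_eq_zero (fun σ _ => h σ)] at hsum1
      exact hpipos.ne hsum1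
    obtain ⟨σ, hσ⟩ := hex
    have hσ' : ∀ j', M j' (σ j') ≠ 0 := by
      intro j'
      exact Finset.prod_ne_zero_iff.mp hσ j' (Finset.mem_univ j')
    have hclaim : ∀ i, idx i = σ (idx' i) := by
      intro i
      by_contra hne
      have h2 : σ⁻¹ (idx i) ≠ idx' i := by
        intro h; apply hne; rw [← h, Equiv.Perm.coe_inv, Equiv.apply_symm_apply]
      have hfninj : ¬ Function.Injective
          (fun x => if x = idx' i then idx i else σ x : Fin (m+1) → Fin (m+1)) := by
        intro hinj
        have h1 : (fun x => if x = idx' i then idx i else σ x) (idx' i) = idx i := by simp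
        have h3 : (fun x => if x = idx' i then idx i else σ x) (σ⁻¹ (idx i)) = idx i := by
          simp [h2, Equiv.apply_symm_apply]
        exact h2 (hinj (h3.trans h1.symm))
      have hTf := hninj _ hfninj
      have hTf' : ∏ j', M j' ((fun x => if x = idx' i then idx i else σ x) j') ≠ 0 := by
        rw [Finset.prod_ne_zero_iff]
        intro j' _
        by_cases hj : j' = idx' i
        · subst hj; simpa using (hMipos i).ne'
        · simpa [hj] using hσ' j'
      exact hTf' hTf
    refine ⟨σ⁻¹, fun i => ?_⟩
    rw [hclaim i, Equiv.Perm.coe_inv, Equiv.symm_apply_apply]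
  · -- exists permutation → equality
    rintro ⟨σ, hσ⟩
    have hM0 : ∀ j' j, j' ≠ σ j → M j' j = 0 := by
      intro j' j hne
      refine Finset.sum_eq_zero fun i hi => ?_
      simp only [Finset.mem_filter, Finset.mem_univ, true_and] at hi
      exact absurd ((hi.1.symm.trans (hσ i)).trans (congrArg σ hi.2)) hne
    have hMdiag : ∀ j', M j' (σ⁻¹ j') = ρ j' := by
      intro j'
      rw [hMentry, hρdef]
      refine Finset.sum_congr ?_ (fun _ _ => rfl)
      ext i
      simp only [Finset.mem_filter, Finset.mem_univ, true_and]
      constructor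
      · rintro ⟨h1, _⟩; exact h1
      · intro h1
        refine ⟨h1, ?_⟩
        have h2 : σ (idx i) = j' := (hσ i).symm.trans h1
        rw [← h2, Equiv.Perm.coe_inv, Equiv.symm_apply_apply]
    have hdet2 : M.det = ((Equiv.Perm.sign σ⁻¹ : ℤ) : ℝ) * ∏ j', M j' (σ⁻¹ j') := by
      rw [hdet]
      refine Finset.sum_eq_single σ⁻¹ ?_ (by simp)
      intro τ _ hτ
      have : ∃ j', τ j' ≠ σ⁻¹ j' := by
        by_contra h
        push_neg at h
        exact hτ (Equiv.ext h)
      obtain ⟨j', hj'⟩ := this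
      have hz : M j' (τ j') = 0 := by
        apply hM0
        intro h
        apply hj'
        rw [← Equiv.symm_apply_apply σ (τ j'), ← h, Equiv.Perm.coe_inv]
      rw [Finset.prod_eq_zero (Finset.mem_univ j') hz, mul_zero]
    rw [hdet2]
    simp only [hMdiag]
    rcases Int.units_eq_one_or (Equiv.Perm.sign σ⁻¹) with h | h <;>
      simp [h, abs_of_nonneg, hpipos.le]
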